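/- Let G=(V,E) be a finite graph with thresholds t:V→ℕ satisfying 1 ≤ t(v) ≤ d_G(v) for all v, let G'=(V',E') be the gadget graph of G, and let s be any incentive vector on V'. For any v ∈ V and any round ℓ ≥ 0, if some vertex of the gadget Λ_v belongs to Active[s,ℓ], then all vertices of Λ_v belong to Active[s,ℓ+3]. -/

import Mathlib

/-- Vertices of the gadget graph `G'` of `G`: for each `v ∈ V` the gadget `Λ_v` has
vertex set `{v', v'', v_1, …, v_{d_G(v)}}`, encoded as `Σ v : V, Fin (d_G(v) + 2)`,
where index `0` encodes `v'`, index `1` encodes `v''`, and indices `2, …, d_G(v)+1`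
encode the internal vertices `v_1, …, v_{d_G(v)}`. -/
abbrev GadgetVert {V : Type*} [Fintype V] (G : SimpleGraph V) [DecidableRel G.Adj] : Type _ :=
  Σ v : V, Fin (G.degree v + 2)

/-- Adjacency of the gadget graph: `u'` and `w'` are adjacent whenever `u` and `w` are
adjacent in `G`; inside each gadget `Λ_v`, the vertices `v'` and `v''` are joined by the
internally disjoint paths `(v', v_i, v'')`, `i = 1, …, d_G(v)`. -/
def gadgetAdj {V : Type*} [Fintype V] (G : SimpleGraph V) [DecidableRel G.Adj]
    (a b : GadgetVert G) : Prop :=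
  ((a.2 : ℕ) = 0 ∧ (b.2 : ℕ) = 0 ∧ G.Adj a.1 b.1) ∨
  (a.1 = b.1 ∧
    (((a.2 : ℕ) = 0 ∧ 2 ≤ (b.2 : ℕ)) ∨ (2 ≤ (a.2 : ℕ) ∧ (b.2 : ℕ) = 0) ∨
     ((a.2 : ℕ) = 1 ∧ 2 ≤ (b.2 : ℕ)) ∨ (2 ≤ (a.2 : ℕ) ∧ (b.2 : ℕ) = 1)))

instance gadgetAdj.decidable {V : Type*} [Fintype V] [DecidableEq V]
    (G : SimpleGraph V) [DecidableRel G.Adj] : DecidableRel (gadgetAdj G) := fun a b => by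
  unfold gadgetAdj; infer_instance

/-- The gadget graph `G'` of `G`. -/
def gadgetGraph {V : Type*} [Fintype V] (G : SimpleGraph V) [DecidableRel G.Adj] :
    SimpleGraph (GadgetVert G) where
  Adj := gadgetAdj G
  symm := ⟨by
    rintro ⟨v, i⟩ ⟨u, j⟩ (⟨hi, hj, hadj⟩ | ⟨rfl, h⟩)
    · exact Or.inl ⟨hj, hi, hadj.symm⟩
    · exact Or.inr ⟨rfl, by tauto⟩⟩
  loopless := ⟨by
    rintro ⟨v, i⟩ (⟨_, _, hadj⟩ | ⟨_, h⟩)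
    · exact G.loopless.irrefl v hadj
    · omega⟩

instance {V : Type*} [Fintype V] [DecidableEq V] (G : SimpleGraph V) [DecidableRel G.Adj] :
    DecidableRel (gadgetGraph G).Adj :=
  fun a b => inferInstanceAs (Decidable (gadgetAdj G a b))

/-- The thresholds on the gadget graph: `v'` keeps the threshold `t v` of `v`, every
other vertex of the gadget `Λ_v` has threshold `1`. -/
def gadgetThreshold {V : Type*} [Fintype V] (G : SimpleGraph V) [DecidableRel G.Adj]
    (t : V → ℕ) (a : GadgetVert G) : ℕ :=
  if (a.2 : ℕ) = 0 then t a.1 else 1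

/-- `activeVec G t s ℓ` : the set of vertices active at round `ℓ` of the activation
process in `G` with thresholds `t`, starting with partial incentives `s`. -/
def activeVec {V : Type*} [Fintype V] [DecidableEq V] (G : SimpleGraph V) [DecidableRel G.Adj]
    (t s : V → ℕ) : ℕ → Finset V
  | 0 => Finset.univ.filter fun v => t v ≤ s v
  | ℓ + 1 =>
    activeVec G t s ℓ ∪
      Finset.univ.filter fun u => t u - s u ≤ (G.neighborFinset u ∩ activeVec G t s ℓ).card

/-- `s` is a target vector for `G` with thresholds `t`. -/
def isTargetVec {V : Type*} [Fintype V] [DecidableEq V] (G : SimpleGraph V) [DecidableRel G.Adj]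
    (t s : V → ℕ) : Prop :=
  ∃ ℓ, activeVec G t s ℓ = Finset.univ

/-- `activeSet G t S ℓ` : the set of vertices active at round `ℓ` of the activation
process in `G` with thresholds `t`, starting at the seed set `S`. -/
def activeSet {V : Type*} [Fintype V] [DecidableEq V] (G : SimpleGraph V) [DecidableRel G.Adj]
    (t : V → ℕ) (S : Finset V) : ℕ → Finset V
  | 0 => S
  | ℓ + 1 =>
    activeSet G t S ℓ ∪
      Finset.univ.filter fun u => t u ≤ (G.neighborFinset u ∩ activeSet G t S ℓ).card

/-- `S` is a target set for `G` with thresholds `t`. -/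
def isTargetSet {V : Type*} [Fintype V] [DecidableEq V] (G : SimpleGraph V) [DecidableRel G.Adj]
    (t : V → ℕ) (S : Finset V) : Prop :=
  ∃ ℓ, activeSet G t S ℓ = Finset.univ


/-- In the gadget graph `G'` with any incentive vector `s`: if some vertex of the gadget
`Λ_v` is active at round `ℓ`, then all vertices of `Λ_v` are active at round `ℓ + 3`. -/
theorem gadget_activates_within_three_rounds {V : Type*} [Fintype V] [DecidableEq V]
    (G : SimpleGraph V) [DecidableRel G.Adj] (t : V → ℕ)
    (ht : ∀ v, 1 ≤ t v ∧ t v ≤ G.degree v)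
    (s : GadgetVert G → ℕ) (v : V) (ℓ : ℕ)
    (h : ∃ i : Fin (G.degree v + 2),
      (⟨v, i⟩ : GadgetVert G) ∈ activeVec (gadgetGraph G) (gadgetThreshold G t) s ℓ) :
    ∀ i : Fin (G.degree v + 2),
      (⟨v, i⟩ : GadgetVert G) ∈ activeVec (gadgetGraph G) (gadgetThreshold G t) s (ℓ + 3) := by
  classical
  obtain ⟨i, hi⟩ := h
  have hd : 1 ≤ G.degree v := le_trans (ht v).1 (ht v).2
  set Gg := gadgetGraph G with hGg
  set T := gadgetThreshold G t with hT
  have step : ∀ (m : ℕ) (u : GadgetVert G),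
      T u - s u ≤ (Gg.neighborFinset u ∩ activeVec Gg T s m).card →
      u ∈ activeVec Gg T s (m + 1) := by
    intro m u hu
    rw [activeVec]
    exact Finset.mem_union_right _ (Finset.mem_filter.mpr ⟨Finset.mem_univ _, hu⟩)
  have mono : ∀ m, activeVec Gg T s m ⊆ activeVec Gg T s (m + 1) := by
    intro m
    rw [activeVec]
    exact Finset.subset_union_left
  have adjg : ∀ (j k : Fin (G.degree v + 2)),
      (((j : ℕ) = 0 ∧ 2 ≤ (k : ℕ)) ∨ (2 ≤ (j : ℕ) ∧ (k : ℕ) = 0) ∨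
       ((j : ℕ) = 1 ∧ 2 ≤ (k : ℕ)) ∨ (2 ≤ (j : ℕ) ∧ (k : ℕ) = 1)) →
      Gg.Adj ⟨v, j⟩ ⟨v, k⟩ := fun j k hjk => Or.inr ⟨rfl, hjk⟩
  have step1 : ∀ (m : ℕ) (u w : GadgetVert G), (u.2 : ℕ) ≠ 0 → Gg.Adj u w →
      w ∈ activeVec Gg T s m → u ∈ activeVec Gg T s (m + 1) := by
    intro m u w hu hadj hw
    apply step
    have h1 : T u = 1 := by simp [hT, gadgetThreshold, hu]
    have hpos : 0 < (Gg.neighborFinset u ∩ activeVec Gg T s m).card :=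
      Finset.card_pos.mpr ⟨w, Finset.mem_inter.mpr
        ⟨(SimpleGraph.mem_neighborFinset _ _ _).mpr hadj, hw⟩⟩
    omega
  have stepv' : ∀ m : ℕ,
      (∀ j : Fin (G.degree v + 2), 2 ≤ (j : ℕ) →
        (⟨v, j⟩ : GadgetVert G) ∈ activeVec Gg T s m) →
      (⟨v, ⟨0, by omega⟩⟩ : GadgetVert G) ∈ activeVec Gg T s (m + 1) := by
    intro m hall
    apply step
    have hTv : T ⟨v, ⟨0, by omega⟩⟩ = t v := by simp [hT, gadgetThreshold]
    have hinj : Function.Injective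
        (fun k : Fin (G.degree v) => (⟨v, ⟨(k : ℕ) + 2, by omega⟩⟩ : GadgetVert G)) := by
      intro a b hab
      injection hab with h1 h2
      have h3 : (a : ℕ) + 2 = (b : ℕ) + 2 := by
        have := congrArg Fin.val h2
        simpa using this
      exact Fin.ext (by omega)
    have hsub : (Finset.univ.image
        (fun k : Fin (G.degree v) => (⟨v, ⟨(k : ℕ) + 2, by omega⟩⟩ : GadgetVert G))) ⊆
        Gg.neighborFinset ⟨v, ⟨0, by omega⟩⟩ ∩ activeVec Gg T s m := by
      intro x hx
      simp only [Finset.mem_image, Finset.mem_univ, true_and] at hx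
      obtain ⟨k, rfl⟩ := hx
      refine Finset.mem_inter.mpr ⟨?_, hall _ (by simp)⟩
      rw [SimpleGraph.mem_neighborFinset]
      exact adjg _ _ (Or.inl ⟨rfl, by simp⟩)
    have hcard : G.degree v ≤
        (Gg.neighborFinset ⟨v, ⟨0, by omega⟩⟩ ∩ activeVec Gg T s m).card := by
      calc G.degree v
          = (Finset.univ.image
              (fun k : Fin (G.degree v) =>
                (⟨v, ⟨(k : ℕ) + 2, by omega⟩⟩ : GadgetVert G))).card := by
            rw [Finset.card_image_of_injective _ hinj, Finset.card_univ, Fintype.card_fin]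
        _ ≤ _ := Finset.card_le_card hsub
    have htv := (ht v).2
    rw [hTv]
    omega
  have htri : (i : ℕ) = 0 ∨ (i : ℕ) = 1 ∨ 2 ≤ (i : ℕ) := by omega
  rcases htri with h0 | h1 | h2
  · -- i = v'
    have hInt : ∀ j : Fin (G.degree v + 2), 2 ≤ (j : ℕ) →
        (⟨v, j⟩ : GadgetVert G) ∈ activeVec Gg T s (ℓ + 1) := by
      intro j hj
      exact step1 ℓ ⟨v, j⟩ ⟨v, i⟩ (by show (j : ℕ) ≠ 0; omega) (adjg _ _ (by omega)) hi
    have h1'' : (⟨v, ⟨1, by omega⟩⟩ : GadgetVert G) ∈ activeVec Gg T s (ℓ + 2) :=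
      step1 (ℓ + 1) _ ⟨v, ⟨2, by omega⟩⟩ (by simp) (adjg _ _ (by simp))
        (hInt ⟨2, by omega⟩ (by simp))
    intro j
    have hj3 : (j : ℕ) = 0 ∨ (j : ℕ) = 1 ∨ 2 ≤ (j : ℕ) := by omega
    rcases hj3 with hj | hj | hj
    · have : j = i := Fin.ext (by omega)
      subst this
      exact mono _ (mono _ (mono _ hi))
    · have : j = ⟨1, by omega⟩ := Fin.ext (by simpa using hj)
      rw [this]
      exact mono _ h1''
    · exact mono _ (mono _ (hInt j hj))
  · -- i = v''
    have hInt : ∀ j : Fin (G.degree v + 2), 2 ≤ (j : ℕ) →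
        (⟨v, j⟩ : GadgetVert G) ∈ activeVec Gg T s (ℓ + 1) := by
      intro j hj
      exact step1 ℓ ⟨v, j⟩ ⟨v, i⟩ (by show (j : ℕ) ≠ 0; omega) (adjg _ _ (by omega)) hi
    have h0' : (⟨v, ⟨0, by omega⟩⟩ : GadgetVert G) ∈ activeVec Gg T s (ℓ + 2) :=
      stepv' (ℓ + 1) hInt
    intro j
    have hj3 : (j : ℕ) = 0 ∨ (j : ℕ) = 1 ∨ 2 ≤ (j : ℕ) := by omega
    rcases hj3 with hj | hj | hj
    · have : j = ⟨0, by omega⟩ := Fin.ext (by simpa using hj)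
      rw [this]
      exact mono _ h0'
    · have : j = i := Fin.ext (by omega)
      subst this
      exact mono _ (mono _ (mono _ hi))
    · exact mono _ (mono _ (hInt j hj))
  · -- i internal
    have h1' : (⟨v, ⟨1, by omega⟩⟩ : GadgetVert G) ∈ activeVec Gg T s (ℓ + 1) :=
      step1 ℓ _ ⟨v, i⟩ (by simp) (adjg _ _ (by simp; omega)) hi
    have hInt : ∀ j : Fin (G.degree v + 2), 2 ≤ (j : ℕ) →
        (⟨v, j⟩ : GadgetVert G) ∈ activeVec Gg T s (ℓ + 2) := by
      intro j hj
      exact step1 (ℓ + 1) ⟨v, j⟩ _ (by show (j : ℕ) ≠ 0; omega) (adjg _ _ (by simp; omega)) h1'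
    have h0' : (⟨v, ⟨0, by omega⟩⟩ : GadgetVert G) ∈ activeVec Gg T s (ℓ + 3) :=
      stepv' (ℓ + 2) hInt
    intro j
    have hj3 : (j : ℕ) = 0 ∨ (j : ℕ) = 1 ∨ 2 ≤ (j : ℕ) := by omega
    rcases hj3 with hj | hj | hj
    · have : j = ⟨0, by omega⟩ := Fin.ext (by simpa using hj)
      rw [this]
      exact h0'
    · have : j = ⟨1, by omega⟩ := Fin.ext (by simpa using hj)
      rw [this]
      exact mono _ (mono _ h1')
    · exact mono _ (hInt j hj)
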